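/- arXiv:1511.05192 — 2 statements merged into one kernel-verified Lean document; each statement's English description precedes it below -/
import Mathlib

section
/- For all λ > 0, μ > 0, t > 0 and every integer n ≥ 1, the iterated Poisson probabilities satisfy the recurrence p_n(t) = (1/n) λ e^{-μ} t · Σ_{k=1}^n (μ^{n-k+1}/(n-k)!) p_{k-1}(t). -/
open scoped BigOperators
open Filter MeasureTheory

/-- Bell polynomial: `B n x = e^{-x} * Σ_{k=0}^∞ k^n x^k / k!` (n-th moment of Poisson(x)). -/
noncomputable def bell (n : ℕ) (x : ℝ) : ℝ :=
  Real.exp (-x) * ∑' k : ℕ, (k : ℝ) ^ n * x ^ k / (Nat.factorial k : ℝ)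

/-- pmf of the iterated Poisson process:
`p_m(t) = e^{-λt(1-e^{-μ})} (μ^m/m!) B_m(λ t e^{-μ})`. -/
noncomputable def iterP (lam mu t : ℝ) (m : ℕ) : ℝ :=
  Real.exp (-lam * t * (1 - Real.exp (-mu))) * (mu ^ m / (Nat.factorial m : ℝ)) *
    bell m (lam * t * Real.exp (-mu))

lemma summable_bell (n : ℕ) {x : ℝ} (hx : 0 ≤ x) :
    Summable (fun k : ℕ => (k : ℝ) ^ n * x ^ k / (Nat.factorial k : ℝ)) := by
  have h : Summable (fun k : ℕ =>
      (n.factorial : ℝ) * ((Real.exp 1 * x) ^ k / (Nat.factorial k : ℝ))) :=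
    (Real.summable_pow_div_factorial _).mul_left _
  refine h.of_nonneg_of_le (fun k => by positivity) (fun k => ?_)
  have hk : (k : ℝ) ^ n ≤ (n.factorial : ℝ) * Real.exp 1 ^ k := by
    have h1 : (k : ℝ) ^ n / (n.factorial : ℝ) ≤ Real.exp k := by
      calc (k : ℝ) ^ n / (n.factorial : ℝ)
          ≤ ∑ i ∈ Finset.range (n + 1), (k : ℝ) ^ i / (i.factorial : ℝ) := by
            refine Finset.single_le_sum (f := fun i => (k : ℝ) ^ i / (i.factorial : ℝ))
              (fun i _ => by positivity) (Finset.self_mem_range_succ n)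
        _ ≤ Real.exp k := Real.sum_le_exp_of_nonneg (by positivity) _
    have h2 : Real.exp (k : ℝ) = Real.exp 1 ^ k := by
      rw [← Real.exp_nat_mul, mul_one]
    rw [div_le_iff₀ (by positivity : (0:ℝ) < (n.factorial : ℝ))] at h1
    rw [← h2]; linarith [h1]
  calc (k : ℝ) ^ n * x ^ k / (Nat.factorial k : ℝ)
      ≤ ((n.factorial : ℝ) * Real.exp 1 ^ k) * x ^ k / (Nat.factorial k : ℝ) := by
        gcongr
    _ = (n.factorial : ℝ) * ((Real.exp 1 * x) ^ k / (Nat.factorial k : ℝ)) := by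
        rw [mul_pow]; ring

lemma bell_rec {n : ℕ} (hn : 1 ≤ n) {x : ℝ} (hx : 0 ≤ x) :
    bell n x = x * ∑ j ∈ Finset.range n, ((n - 1).choose j : ℝ) * bell j x := by
  have hsum : ∀ m : ℕ, Summable (fun k : ℕ => (k : ℝ) ^ m * x ^ k / (Nat.factorial k : ℝ)) :=
    fun m => summable_bell m hx
  have key : (∑' k : ℕ, (k : ℝ) ^ n * x ^ k / (Nat.factorial k : ℝ))
      = x * ∑ j ∈ Finset.range n, ((n - 1).choose j : ℝ) *
          ∑' k : ℕ, (k : ℝ) ^ j * x ^ k / (Nat.factorial k : ℝ) := by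
    rw [Summable.tsum_eq_zero_add (hsum n)]
    have h0 : ((0 : ℕ) : ℝ) ^ n * x ^ 0 / (Nat.factorial 0 : ℝ) = 0 := by
      simp [zero_pow (by omega : n ≠ 0)]
    rw [h0, zero_add]
    have hterm : ∀ k : ℕ, ((k + 1 : ℕ) : ℝ) ^ n * x ^ (k + 1) / (Nat.factorial (k + 1) : ℝ)
        = ∑ j ∈ Finset.range n,
            x * ((n - 1).choose j : ℝ) * ((k : ℝ) ^ j * x ^ k / (Nat.factorial k : ℝ)) := by
      intro k
      have hpow : ((k : ℝ) + 1) ^ (n - 1) = ∑ j ∈ Finset.range n,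
          (k : ℝ) ^ j * ((n - 1).choose j : ℝ) := by
        have := add_pow (k : ℝ) 1 (n - 1)
        simp only [one_pow, mul_one] at this
        rw [this]
        have : n - 1 + 1 = n := by omega
        rw [this]
      have hfac : (Nat.factorial (k + 1) : ℝ) = (k + 1 : ℝ) * (Nat.factorial k : ℝ) := by
        rw [Nat.factorial_succ]; push_cast; ring
      have hn' : ((k : ℝ) + 1) ^ n = ((k : ℝ) + 1) * ((k : ℝ) + 1) ^ (n - 1) := by
        rw [← pow_succ']
        congr 1
        omega
      push_cast
      have hk1 : ((k : ℝ) + 1) ≠ 0 := by positivity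
      rw [hn', hpow, hfac, mul_assoc, mul_div_mul_left _ _ hk1, Finset.sum_mul,
        Finset.sum_div]
      refine Finset.sum_congr rfl fun j _ => ?_
      rw [pow_succ]
      ring
    rw [tsum_congr hterm]
    rw [Summable.tsum_finsetSum (fun j _ => ((hsum j).mul_left _))]
    rw [Finset.mul_sum]
    refine Finset.sum_congr rfl fun j _ => ?_
    rw [tsum_mul_left]
    ring
  unfold bell
  rw [key, Finset.mul_sum, Finset.mul_sum, Finset.mul_sum]
  refine Finset.sum_congr rfl fun j _ => by ring

/-- recurrence
`p_n(t) = (1/n) λ e^{-μ} t Σ_{k=1}^n (μ^{n-k+1}/(n-k)!) p_{k-1}(t)` for `n ≥ 1`. -/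
theorem stmt7 (lam mu t : ℝ) (hlam : 0 < lam) (hmu : 0 < mu) (ht : 0 < t) (n : ℕ) (hn : 1 ≤ n) :
    iterP lam mu t n = (1 / n) * lam * Real.exp (-mu) * t *
      ∑ k ∈ Finset.Icc 1 n, mu ^ (n - k + 1) / (Nat.factorial (n - k) : ℝ) * iterP lam mu t (k - 1) := by
  set y := lam * t * Real.exp (-mu) with hy
  have hy0 : 0 ≤ y := by positivity
  set E := Real.exp (-lam * t * (1 - Real.exp (-mu))) with hE
  have hreindex : ∑ k ∈ Finset.Icc 1 n,
      mu ^ (n - k + 1) / (Nat.factorial (n - k) : ℝ) * iterP lam mu t (k - 1)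
      = ∑ j ∈ Finset.range n,
          mu ^ (n - (1 + j) + 1) / (Nat.factorial (n - (1 + j)) : ℝ) * iterP lam mu t (1 + j - 1) := by
    rw [← Finset.Ico_add_one_right_eq_Icc, Finset.sum_Ico_eq_sum_range, Nat.add_sub_cancel]
  rw [hreindex]
  unfold iterP
  rw [bell_rec hn hy0]
  rw [Finset.mul_sum, Finset.mul_sum, Finset.mul_sum]
  refine Finset.sum_congr rfl fun j hj => ?_
  have hjn : j < n := Finset.mem_range.mp hj
  have h1 : 1 + j - 1 = j := by omega
  have h2 : n - (1 + j) = n - 1 - j := by omega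
  have h3 : n - (1 + j) + 1 = n - j := by omega
  rw [h1, h3, h2, ← hy]
  -- goal: E * (mu^n/n!) * (y * (C * bell j y)) = (1/n*lam*exp(-mu)*t) * (mu^(n-j)/(n-1-j)! * (E * (mu^j/j!) * bell j y))
  have hfacn : (n.factorial : ℝ) = (n : ℝ) * ((n - 1).factorial : ℝ) := by
    have : n.factorial = n * (n - 1).factorial := by
      conv_lhs => rw [show n = (n - 1) + 1 by omega]
      rw [Nat.factorial_succ]
      congr 1
      omega
    rw [this]; push_cast; ring
  have hchoose : ((n - 1).choose j : ℝ) * (j.factorial : ℝ) * ((n - 1 - j).factorial : ℝ)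
      = ((n - 1).factorial : ℝ) := by
    have := Nat.choose_mul_factorial_mul_factorial (by omega : j ≤ n - 1)
    exact_mod_cast this
  have hmupow : mu ^ (n - j) * mu ^ j = mu ^ n := by
    rw [← pow_add]; congr 1; omega
  have hn0 : (n : ℝ) ≠ 0 := by positivity
  have hf1 : (j.factorial : ℝ) ≠ 0 := by positivity
  have hf2 : ((n - 1 - j).factorial : ℝ) ≠ 0 := by positivity
  have hf3 : ((n - 1).factorial : ℝ) ≠ 0 := by positivity
  have hc0 : (((n - 1).choose j : ℕ) : ℝ) ≠ 0 := by
    exact_mod_cast (Nat.choose_pos (by omega : j ≤ n - 1)).ne'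
  have hs : mu ^ n / (n.factorial : ℝ) * (((n - 1).choose j : ℕ) : ℝ)
      = mu ^ (n - j) / ((n - 1 - j).factorial : ℝ) * (mu ^ j / (j.factorial : ℝ)) / n := by
    rw [← hmupow, hfacn, ← hchoose]
    field_simp
  have hyeq : 1 / (n : ℝ) * lam * Real.exp (-mu) * t = y / n := by
    rw [hy]; ring
  rw [hyeq]
  linear_combination (Real.exp (-lam * t * (1 - Real.exp (-mu))) * y * bell j y) * hs
end

section
/- For all λ > 0, μ > 0 and every integer n ≥ 1, the mean sojourn time of the iterated Poisson process in state n is finite and equals ∫_0^∞ p_n(t) dt = (1/λ) (μ^n/n!) Σ_{k=1}^∞ k^n e^{-μ k} < ∞. -/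
open scoped BigOperators
open Filter MeasureTheory

section Aux
open Set Topology

/-- integrability of `t^k e^{-rt}` on `(0,∞)`. -/
lemma lemA {r : ℝ} (hr : 0 < r) (k : ℕ) :
    IntegrableOn (fun t : ℝ => t ^ k * Real.exp (-(r * t))) (Set.Ioi 0) := by
  apply integrable_of_isBigO_exp_neg (half_pos hr)
  · fun_prop
  · rw [Asymptotics.isBigO_iff]
    refine ⟨1, ?_⟩
    have h := tendsto_rpow_mul_exp_neg_mul_atTop_nhds_zero (k : ℝ) (r/2) (half_pos hr)
    have h2 : Tendsto (fun t : ℝ => t ^ k * Real.exp (-(r*t)) / Real.exp (-(r/2) * t))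
        atTop (𝓝 0) := by
      refine h.congr' ?_
      filter_upwards [eventually_gt_atTop (0:ℝ)] with t ht
      rw [Real.rpow_natCast, eq_div_iff (Real.exp_ne_zero _), mul_assoc, ← Real.exp_add]
      ring_nf
    have := h2.eventually (eventually_le_nhds (by norm_num : (0:ℝ) < 1))
    filter_upwards [this, eventually_gt_atTop (0:ℝ)] with t ht ht0
    have he : (0:ℝ) < Real.exp (-(r/2)*t) := Real.exp_pos _
    rw [Real.norm_eq_abs, Real.norm_eq_abs, abs_of_pos he, one_mul]
    calc |t ^ k * Real.exp (-(r*t))| = t ^ k * Real.exp (-(r*t)) := by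
            rw [abs_of_nonneg (by positivity)]
      _ ≤ Real.exp (-(r/2)*t) := by
            exact (div_le_one he).1 ht

/-- value of `∫_0^∞ t^k e^{-rt} dt`. -/
lemma lemB {r : ℝ} (hr : 0 < r) (k : ℕ) :
    ∫ t in Set.Ioi (0:ℝ), t ^ k * Real.exp (-(r * t))
      = (1 / r) ^ (k + 1) * (Nat.factorial k : ℝ) := by
  have h := Real.integral_rpow_mul_exp_neg_mul_Ioi (a := (k : ℝ) + 1) (r := r)
    (by positivity) hr
  have h2 : ∀ t ∈ Set.Ioi (0:ℝ), t ^ (((k:ℝ) + 1) - 1) * Real.exp (-(r * t))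
      = t ^ k * Real.exp (-(r * t)) := by
    intro t _
    rw [add_sub_cancel_right, Real.rpow_natCast]
  rw [setIntegral_congr_fun measurableSet_Ioi h2, Real.Gamma_nat_eq_factorial] at h
  rw [h, ← Real.rpow_natCast (1/r) (k+1)]
  push_cast
  ring

lemma lemC {f : ℕ → ℝ} : (‖∑' i, f i‖₊ : ENNReal) ≤ ∑' i, (‖f i‖₊ : ENNReal) := by
  by_cases h : Summable fun i => ‖f i‖₊
  · rw [← ENNReal.coe_tsum h]
    exact_mod_cast nnnorm_tsum_le h
  · have : ∑' i, (‖f i‖₊ : ENNReal) = ⊤ := by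
      by_contra hne
      exact h (ENNReal.tsum_coe_ne_top_iff_summable.1 hne)
    rw [this]; exact le_top

/-- summability of `k^n x^k / k!`. -/
lemma lemD (n : ℕ) (x : ℝ) :
    Summable (fun k : ℕ => (k : ℝ) ^ n * x ^ k / (Nat.factorial k : ℝ)) := by
  apply Summable.of_norm_bounded_eventually_nat
    (g := fun k => (2 * |x|) ^ k / (Nat.factorial k : ℝ))
    (Real.summable_pow_div_factorial (2 * |x|))
  have h := tendsto_pow_const_div_const_pow_of_one_lt n (by norm_num : (1:ℝ) < 2)
  filter_upwards [h.eventually (eventually_le_nhds (by norm_num : (0:ℝ) < 1)),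
    eventually_gt_atTop 0] with k hk hk0
  have h2 : (k:ℝ) ^ n ≤ 2 ^ k := by
    have h2pos : (0:ℝ) < 2 ^ k := by positivity
    exact (div_le_one h2pos).1 hk
  rw [Real.norm_eq_abs, abs_div, abs_of_nonneg (by positivity : (0:ℝ) ≤ (Nat.factorial k:ℝ)),
    abs_mul, abs_of_nonneg (by positivity : (0:ℝ) ≤ (k:ℝ)^n), abs_pow, mul_pow]
  gcongr

end Aux

/-- the mean sojourn time in state `n ≥ 1` is finite and equals
`∫_0^∞ p_n(t) dt = (1/λ)(μ^n/n!) Σ_{k=1}^∞ k^n e^{-μk} < ∞`. -/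
theorem stmt13 (lam mu : ℝ) (hlam : 0 < lam) (hmu : 0 < mu) (n : ℕ) (hn : 1 ≤ n) :
    MeasureTheory.IntegrableOn (fun t => iterP lam mu t n) (Set.Ioi (0 : ℝ)) ∧
    Summable (fun k : ℕ => ((k : ℝ) + 1) ^ n * Real.exp (-mu * ((k : ℝ) + 1))) ∧
    ∫ t in Set.Ioi (0 : ℝ), iterP lam mu t n
      = (1 / lam) * (mu ^ n / (Nat.factorial n : ℝ)) *
          ∑' k : ℕ, ((k : ℝ) + 1) ^ n * Real.exp (-mu * ((k : ℝ) + 1)) := by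
  set q : ℝ := lam * Real.exp (-mu) with hq_def
  have hq : 0 < q := mul_pos hlam (Real.exp_pos _)
  set C : ℝ := mu ^ n / (Nat.factorial n : ℝ) with hC_def
  have hC : 0 < C := by
    apply div_pos (pow_pos hmu n)
    exact_mod_cast Nat.factorial_pos n
  set F : ℕ → ℝ → ℝ := fun k t =>
    (C * (k : ℝ) ^ n * q ^ k / (Nat.factorial k : ℝ)) * (t ^ k * Real.exp (-(lam * t)))
    with hF_def
  -- pointwise identity
  have hpt : ∀ t : ℝ, iterP lam mu t n = ∑' k, F k t := by
    intro t
    have h1 : ∑' k, F k t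
        = (C * Real.exp (-(lam * t))) *
          ∑' k : ℕ, (k : ℝ) ^ n * (lam * t * Real.exp (-mu)) ^ k / (Nat.factorial k : ℝ) := by
      rw [← tsum_mul_left]
      refine tsum_congr fun k => ?_
      rw [hF_def]
      rw [show lam * t * Real.exp (-mu) = q * t by rw [hq_def]; ring, mul_pow]
      ring
    rw [h1, iterP, bell]
    have e1 : Real.exp (-lam * t * (1 - Real.exp (-mu)))
        * Real.exp (-(lam * t * Real.exp (-mu))) = Real.exp (-(lam * t)) := by
      rw [← Real.exp_add]; ring_nf
    rw [← e1, ← hC_def]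
    ring
  -- integrability of each term
  have hFint : ∀ k, IntegrableOn (F k) (Set.Ioi (0:ℝ)) := fun k =>
    (lemA hlam k).const_mul _
  -- value of each integral
  have hval : ∀ k : ℕ, ∫ t in Set.Ioi (0:ℝ), F k t
      = (1 / lam) * C * ((k : ℝ) ^ n * Real.exp (-mu * k)) := by
    intro k
    rw [hF_def]
    simp only []
    rw [MeasureTheory.integral_const_mul, lemB hlam k]
    have hek : Real.exp (-mu * k) = Real.exp (-mu) ^ k := by
      rw [← Real.exp_nat_mul]; ring_nf
    rw [hek, hq_def, mul_pow, pow_succ]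
    have hfk : (Nat.factorial k : ℝ) ≠ 0 := by exact_mod_cast (Nat.factorial_pos k).ne'
    have hlam0 : lam ≠ 0 := hlam.ne'
    field_simp
    ring_nf
    rw [mul_assoc, ← mul_pow, mul_inv_cancel₀ hlam0, one_pow, mul_one]
  -- norms
  have hFnonneg : ∀ k, ∀ t ∈ Set.Ioi (0:ℝ), 0 ≤ F k t := by
    intro k t ht
    have ht0 : 0 < t := ht
    rw [hF_def]
    have : (0:ℝ) ≤ C * (k : ℝ) ^ n * q ^ k / (Nat.factorial k : ℝ) := by positivity
    positivity
  have hnorm : ∀ k : ℕ, ∫ t in Set.Ioi (0:ℝ), ‖F k t‖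
      = (1 / lam) * C * ((k : ℝ) ^ n * Real.exp (-mu * k)) := by
    intro k
    rw [← hval k]
    refine setIntegral_congr_fun measurableSet_Ioi fun t ht => ?_
    rw [Real.norm_eq_abs, abs_of_nonneg (hFnonneg k t ht)]
  -- summability of the geometric-type series
  have hgsum : Summable (fun k : ℕ => (k : ℝ) ^ n * Real.exp (-mu * k)) := by
    have h := summable_pow_mul_geometric_of_norm_lt_one (R := ℝ) n
      (r := Real.exp (-mu))
      (by rw [Real.norm_eq_abs, abs_of_pos (Real.exp_pos _)]
          exact Real.exp_lt_one_iff.2 (neg_neg_iff_pos.2 hmu))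
    refine h.congr fun k => ?_
    rw [← Real.exp_nat_mul]; ring_nf
  have hS : Summable (fun k : ℕ => ∫ t in Set.Ioi (0:ℝ), ‖F k t‖) := by
    simp only [hnorm]
    exact hgsum.mul_left _
  -- integral exchange
  have hkey := MeasureTheory.integral_tsum_of_summable_integral_norm hFint hS
  have hcong : ∫ t in Set.Ioi (0:ℝ), iterP lam mu t n
      = ∫ t in Set.Ioi (0:ℝ), ∑' k, F k t := by
    simp only [hpt]
  -- shifted sums
  have hsum2 : Summable (fun k : ℕ => ((k : ℝ) + 1) ^ n * Real.exp (-mu * ((k : ℝ) + 1))) := by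
    have h := (summable_nat_add_iff 1).2 hgsum
    refine h.congr fun k => ?_
    push_cast
    ring_nf
  have hshift : ∑' k : ℕ, (k : ℝ) ^ n * Real.exp (-mu * k)
      = ∑' k : ℕ, ((k : ℝ) + 1) ^ n * Real.exp (-mu * ((k : ℝ) + 1)) := by
    rw [Summable.tsum_eq_zero_add hgsum]
    have h0 : ((0:ℕ) : ℝ) ^ n * Real.exp (-mu * ((0:ℕ):ℝ)) = 0 := by
      rw [Nat.cast_zero, zero_pow (Nat.one_le_iff_ne_zero.mp hn), zero_mul]
    rw [h0, zero_add]
    refine tsum_congr fun k => ?_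
    push_cast
    ring_nf
  -- integrability of the total function
  have hint : MeasureTheory.IntegrableOn (fun t => iterP lam mu t n) (Set.Ioi (0 : ℝ)) := by
    have heq : (fun t => iterP lam mu t n) = fun t => ∑' k, F k t := funext hpt
    rw [heq]
    constructor
    · -- a.e. strong measurability
      have hmeas : ∀ k, AEStronglyMeasurable (F k) (volume.restrict (Set.Ioi (0:ℝ))) :=
        fun k => (hFint k).aestronglyMeasurable
      have hG : AEMeasurable (fun t => ((∑' k, ‖F k t‖₊ : NNReal) : ℝ))
          (volume.restrict (Set.Ioi (0:ℝ))) :=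
        (AEMeasurable.nnreal_tsum fun k => (hmeas k).nnnorm.aemeasurable).coe_nnreal_real
      have hae : (fun t => ∑' k, F k t)
          =ᵐ[volume.restrict (Set.Ioi (0:ℝ))] fun t => ((∑' k, ‖F k t‖₊ : NNReal) : ℝ) := by
        filter_upwards [MeasureTheory.ae_restrict_mem measurableSet_Ioi] with t ht
        rw [NNReal.coe_tsum]
        refine tsum_congr fun k => ?_
        rw [coe_nnnorm, Real.norm_eq_abs, abs_of_nonneg (hFnonneg k t ht)]
      exact (hG.congr hae.symm).aestronglyMeasurable
    · -- finite integral
      show ∫⁻ t, (‖∑' k, F k t‖₊ : ENNReal) ∂(volume.restrict (Set.Ioi (0:ℝ))) < ⊤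
      calc ∫⁻ t in Set.Ioi (0:ℝ), (‖∑' k, F k t‖₊ : ENNReal)
          ≤ ∫⁻ t in Set.Ioi (0:ℝ), ∑' k, (‖F k t‖₊ : ENNReal) :=
            MeasureTheory.lintegral_mono fun t => lemC
        _ = ∑' k, ∫⁻ t in Set.Ioi (0:ℝ), (‖F k t‖₊ : ENNReal) :=
            MeasureTheory.lintegral_tsum fun k => (hFint k).aestronglyMeasurable.nnnorm.aemeasurable.coe_nnreal_ennreal
        _ = ∑' k, ENNReal.ofReal (∫ t in Set.Ioi (0:ℝ), ‖F k t‖) := by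
            refine tsum_congr fun k => ?_
            rw [MeasureTheory.ofReal_integral_eq_lintegral_ofReal (hFint k).norm
              (MeasureTheory.ae_of_all _ fun t => norm_nonneg _)]
            simp_rw [ofReal_norm_eq_enorm]; rfl
        _ < ⊤ := by
            rw [← ENNReal.ofReal_tsum_of_nonneg
              (fun k => MeasureTheory.integral_nonneg fun t => norm_nonneg _) hS]
            exact ENNReal.ofReal_lt_top
  refine ⟨hint, hsum2, ?_⟩
  rw [hcong, ← hkey]
  rw [show (∑' k, ∫ t in Set.Ioi (0:ℝ), F k t)
      = ∑' k : ℕ, (1 / lam) * C * ((k : ℝ) ^ n * Real.exp (-mu * k)) from tsum_congr hval,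
    tsum_mul_left, hshift, hC_def]
end
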